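/- Let f : ℝⁿ → ℝ be convex differentiable, λ > 0, X = {x : l ≤ x ≤ u} a box, and H(x) = λ‖x‖₀ + f(x) + δ_X(x). Suppose x* ∈ X satisfies: for every x ∈ X and every index i with x*_i ≠ 0, (x_i − x*_i)(∇f(x*))_i ≥ 0. Then x* is a local minimizer of H: there is a neighborhood U of x* in X on which H(x) ≥ H(x*). -/

import Mathlib

open scoped Classical

/-- `norm0 x` counts the nonzero entries of `x` (the ℓ0 "norm"), as a real number. -/
noncomputable def norm0 {n : ℕ} (x : EuclideanSpace ℝ (Fin n)) : ℝ :=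
  ((Finset.univ.filter fun i => x i ≠ 0).card : ℝ)

theorem grad_convex_ineq {n : ℕ} (f : EuclideanSpace ℝ (Fin n) → ℝ)
    (g xs x : EuclideanSpace ℝ (Fin n))
    (hconv : ConvexOn ℝ Set.univ f) (hg : HasGradientAt f g xs) :
    f xs + ∑ i, g i * (x i - xs i) ≤ f x := by
  rcases eq_or_ne x xs with rfl | hne
  · simp
  have hc : HasDerivAt (fun t : ℝ => xs + t • (x - xs)) (x - xs) 0 := by
    simpa using ((hasDerivAt_id (0:ℝ)).smul_const (x - xs)).const_add xs
  have h1 : HasFDerivAt f (InnerProductSpace.toDual ℝ _ g) (xs + (0:ℝ) • (x - xs)) := by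
    simpa using hg.hasFDerivAt
  have hφ : HasDerivAt (fun t : ℝ => f (xs + t • (x - xs))) (inner ℝ g (x - xs) : ℝ) 0 := by
    exact (h1.comp_hasDerivAt 0 hc).congr_deriv (by simp)
  have hφc : ConvexOn ℝ Set.univ (fun t : ℝ => f (xs + t • (x - xs))) := by
    have h := hconv.comp_affineMap (AffineMap.lineMap xs x)
    have he : (fun t : ℝ => f (xs + t • (x - xs))) = f ∘ (AffineMap.lineMap xs x) := by
      funext t
      simp [Function.comp, AffineMap.lineMap_apply, add_comm]
    rw [he]
    simpa using h
  have hs := hφc.le_slope_of_hasDerivAt (Set.mem_univ 0) (Set.mem_univ 1) one_pos hφ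
  have hi : (inner ℝ g (x - xs) : ℝ) = ∑ i, g i * (x i - xs i) := by
    simp [PiLp.inner_apply, RCLike.inner_apply, mul_comm]
  simp [slope_def_field, hi] at hs
  linarith

/-- Local minimizer criterion for `H = λ‖·‖₀ + f + δ_X`: if for every `x ∈ X` and
every index `i` in the support of `x*` one has `(x_i - x*_i)(∇f(x*))_i ≥ 0`, then
`x*` is a local minimizer of `H` (expressed as `λ‖·‖₀ + f` on the box `X`). -/
theorem local_minimizer_criterion {n : ℕ}
    (f : EuclideanSpace ℝ (Fin n) → ℝ)
    (f' : EuclideanSpace ℝ (Fin n) → EuclideanSpace ℝ (Fin n))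
    (lam : ℝ) (hlam : 0 < lam) (l u : Fin n → ℝ)
    (X : Set (EuclideanSpace ℝ (Fin n)))
    (hX : X = {x : EuclideanSpace ℝ (Fin n) | ∀ i, l i ≤ x i ∧ x i ≤ u i})
    (hconv : ConvexOn ℝ Set.univ f)
    (hgrad : ∀ z, HasGradientAt f (f' z) z)
    (xs : EuclideanSpace ℝ (Fin n)) (hxs : xs ∈ X)
    (hopt : ∀ x ∈ X, ∀ i, xs i ≠ 0 → 0 ≤ (x i - xs i) * f' xs i) :
    ∃ U ∈ nhds xs, ∀ x ∈ U ∩ X,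
      lam * norm0 xs + f xs ≤ lam * norm0 x + f x := by
  classical
  -- radius per coordinate
  set e : Fin n → ℝ := fun i =>
    if xs i ≠ 0 then |xs i| else if f' xs i = 0 then 1 else lam / |f' xs i| with he
  have hepos : ∀ i, 0 < e i := by
    intro i
    simp only [he]
    split_ifs with h1 h2
    · exact abs_pos.mpr h1
    · norm_num
    · exact div_pos hlam (abs_pos.mpr h2)
  refine ⟨⋂ i, {x | |x i - xs i| < e i}, ?_, ?_⟩
  · rw [Filter.iInter_mem]
    intro i
    have hcont : Continuous fun x : EuclideanSpace ℝ (Fin n) => x i :=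
      (EuclideanSpace.proj i).continuous
    have : IsOpen {x : EuclideanSpace ℝ (Fin n) | |x i - xs i| < e i} := by
      have : {x : EuclideanSpace ℝ (Fin n) | |x i - xs i| < e i} =
          (fun x : EuclideanSpace ℝ (Fin n) => x i) ⁻¹' (Metric.ball (xs i) (e i)) := by
        ext x; simp [Metric.mem_ball, Real.dist_eq]
      rw [this]
      exact Metric.isOpen_ball.preimage hcont
    exact this.mem_nhds (by simpa using hepos i)
  · rintro x ⟨hxU, hxX⟩
    simp only [Set.mem_iInter, Set.mem_setOf_eq] at hxU
    -- support of xs is contained in support of x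
    set A : Finset (Fin n) := Finset.univ.filter fun i => xs i ≠ 0 with hA
    set B : Finset (Fin n) := Finset.univ.filter fun i => xs i = 0 ∧ x i ≠ 0 with hB
    have hAsub : ∀ i ∈ A, x i ≠ 0 := by
      intro i hi
      rw [hA, Finset.mem_filter] at hi
      have hlt : |x i - xs i| < |xs i| := by
        simpa [he, hi.2] using hxU i
      intro hx0
      rw [hx0, zero_sub, abs_neg] at hlt
      exact absurd hlt (lt_irrefl _)
    have hcard : (A.card : ℝ) + B.card ≤ norm0 x := by
      have hsub : A ∪ B ⊆ Finset.univ.filter fun i => x i ≠ 0 := by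
        intro i hi
        rw [Finset.mem_union] at hi
        rcases hi with hi | hi
        · exact Finset.mem_filter.mpr ⟨Finset.mem_univ i, hAsub i hi⟩
        · rw [hB, Finset.mem_filter] at hi
          exact Finset.mem_filter.mpr ⟨Finset.mem_univ i, hi.2.2⟩
      have hdisj : Disjoint A B := by
        rw [Finset.disjoint_left]
        intro i hiA hiB
        rw [hA, Finset.mem_filter] at hiA
        rw [hB, Finset.mem_filter] at hiB
        exact hiA.2 hiB.2.1
      have := Finset.card_le_card hsub
      rw [Finset.card_union_of_disjoint hdisj] at this
      unfold norm0
      exact_mod_cast this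
    have hnorm0xs : norm0 xs = (A.card : ℝ) := rfl
    -- gradient inequality
    have hkey := grad_convex_ineq f (f' xs) xs x hconv (hgrad xs)
    -- split the sum
    have hsplit : ∑ i, f' xs i * (x i - xs i) =
        (∑ i ∈ A, f' xs i * (x i - xs i)) + ∑ i ∈ Aᶜ, f' xs i * (x i - xs i) := by
      rw [Finset.sum_add_sum_compl]
    have hApos : 0 ≤ ∑ i ∈ A, f' xs i * (x i - xs i) := by
      apply Finset.sum_nonneg
      intro i hi
      rw [hA, Finset.mem_filter] at hi
      have := hopt x hxX i hi.2
      linarith [this]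
    have hAc : ∑ i ∈ Aᶜ, f' xs i * (x i - xs i) = ∑ i ∈ B, f' xs i * (x i - xs i) := by
      apply (Finset.sum_subset ?_ ?_).symm
      · intro i hi
        rw [hB, Finset.mem_filter] at hi
        rw [Finset.mem_compl, hA, Finset.mem_filter]
        push_neg
        intro _
        exact hi.2.1
      · intro i hi hni
        rw [Finset.mem_compl, hA, Finset.mem_filter] at hi
        push_neg at hi
        have hxsi : xs i = 0 := hi (Finset.mem_univ i)
        have hxi : x i = 0 := by
          by_contra hxi
          exact hni (Finset.mem_filter.mpr ⟨Finset.mem_univ i, hxsi, hxi⟩)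
        rw [hxsi, hxi]
        ring
    have hBlow : ∀ i ∈ B, -lam ≤ f' xs i * (x i - xs i) := by
      intro i hi
      rw [hB, Finset.mem_filter] at hi
      obtain ⟨-, hxsi, hxi⟩ := hi
      rcases eq_or_ne (f' xs i) 0 with hfi | hfi
      · rw [hfi]; simp; linarith
      · have hlt : |x i - xs i| < lam / |f' xs i| := by
          simpa [he, hxsi, hfi] using hxU i
        have habs : |f' xs i * (x i - xs i)| < lam := by
          rw [abs_mul]
          calc |f' xs i| * |x i - xs i| < |f' xs i| * (lam / |f' xs i|) := by
                exact mul_lt_mul_of_pos_left hlt (abs_pos.mpr hfi)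
            _ = lam := by field_simp
        have := neg_lt_of_abs_lt habs
        linarith
    have hAcB : -(lam * B.card) ≤ ∑ i ∈ Aᶜ, f' xs i * (x i - xs i) := by
      rw [hAc]
      calc -(lam * B.card) = ∑ _i ∈ B, -lam := by
            rw [Finset.sum_const, nsmul_eq_mul]; ring
        _ ≤ ∑ i ∈ B, f' xs i * (x i - xs i) := Finset.sum_le_sum hBlow
    -- conclude
    rw [hnorm0xs]
    have : (A.card : ℝ) + B.card ≤ norm0 x := hcard
    nlinarith [hkey, hsplit, hApos, hAcB, hcard]
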